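/- Let θ > 2/(1-β̂) with 0 < β̂ < 1, and suppose F: (0,∞) → [0,1] satisfies F(y) ≤ K·exp(-c·y^{-θ}) for y ∈ (0,1]. Then the function y ↦ F(y)·y^{-3}·E_{1-β̂,1-β̂}(y^{-2}) is integrable on (0,∞). -/

import Mathlib

open MeasureTheory Real Filter


private lemma fact_mul_pow_le_fact (k d : ℕ) :
    Nat.factorial k * (k+1)^d ≤ Nat.factorial (k + d) := by
  induction d with
  | zero => simp
  | succ d ih =>
    have h1 : Nat.factorial k * (k+1)^(d+1) = (Nat.factorial k * (k+1)^d) * (k+1) := by ring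
    have h2 : (Nat.factorial k * (k+1)^d) * (k+1) ≤ Nat.factorial (k+d) * (k+d+1) :=
      Nat.mul_le_mul ih (by omega)
    have h3 : Nat.factorial (k+d) * (k+d+1) = Nat.factorial (k + (d+1)) := by
      rw [show k + (d+1) = (k+d)+1 by omega, Nat.factorial_succ]; ring
    omega
private lemma fact_le_Gamma {s : ℝ} (hs : 2 ≤ s) :
    (Nat.factorial (⌊s⌋₊ - 1) : ℝ) ≤ Real.Gamma s := by
  have h2 : (2:ℕ) ≤ ⌊s⌋₊ := Nat.le_floor (by exact_mod_cast hs)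
  have hfl : (⌊s⌋₊ : ℝ) ≤ s := Nat.floor_le (by linarith)
  have hmem : (⌊s⌋₊ : ℝ) ∈ Set.Ici (2:ℝ) := by
    simp only [Set.mem_Ici]; exact_mod_cast h2
  have hmono : Real.Gamma (⌊s⌋₊ : ℝ) ≤ Real.Gamma s :=
    Real.Gamma_strictMonoOn_Ici.monotoneOn hmem (Set.mem_Ici.2 hs) hfl
  have heq : Real.Gamma (⌊s⌋₊ : ℝ) = Nat.factorial (⌊s⌋₊ - 1) := by
    have h3 : ⌊s⌋₊ = (⌊s⌋₊ - 1) + 1 := by omega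
    have h4 : ((⌊s⌋₊ : ℝ)) = ((⌊s⌋₊ - 1 : ℕ) : ℝ) + 1 := by
      conv_lhs => rw [h3]
      push_cast; ring
    rw [h4, Real.Gamma_nat_eq_factorial]
  linarith [heq ▸ hmono]

private lemma exp_neg_le_fact_div (k : ℕ) {x : ℝ} (hx : 0 < x) :
    Real.exp (-x) ≤ Nat.factorial k / x ^ k := by
  have h1 : x ^ k / Nat.factorial k ≤ Real.exp x := Real.pow_div_factorial_le_exp x hx.le k
  have hfk : (0:ℝ) < Nat.factorial k := by exact_mod_cast Nat.factorial_pos k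
  have hxk : (0:ℝ) < x ^ k := pow_pos hx k
  rw [Real.exp_neg, inv_le_iff_one_le_mul₀ (Real.exp_pos x)]
  rw [div_le_iff₀ hfk] at h1
  rw [div_mul_eq_mul_div, le_div_iff₀ hxk]
  nlinarith [Real.exp_pos x]

private lemma ofReal_tsum_le (f : ℕ → ℝ) (hf : ∀ n, 0 ≤ f n) :
    ENNReal.ofReal (∑' n, f n) ≤ ∑' n, ENNReal.ofReal (f n) := by
  by_cases h : Summable f
  · rw [ENNReal.ofReal_tsum_of_nonneg hf h]
  · rw [tsum_eq_zero_of_not_summable h]; simp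

private lemma tsum_eq_toReal_tsum_ofReal (f : ℕ → ℝ) (hf : ∀ n, 0 ≤ f n) :
    ∑' n, f n = (∑' n, ENNReal.ofReal (f n)).toReal := by
  by_cases h : Summable f
  · rw [← ENNReal.ofReal_tsum_of_nonneg hf h, ENNReal.toReal_ofReal (tsum_nonneg hf)]
  · rw [tsum_eq_zero_of_not_summable h]
    have htop : (∑' n, ENNReal.ofReal (f n)) = ⊤ := by
      by_contra hne
      have hs : Summable (fun n => (f n).toNNReal) :=
        ENNReal.tsum_coe_ne_top_iff_summable.mp (by simpa [ENNReal.ofReal] using hne)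
      have hs2 : Summable f := by
        have := NNReal.summable_coe.mpr hs
        refine this.congr fun n => ?_
        exact Real.coe_toNNReal _ (hf n)
      exact h hs2
    rw [htop]; simp

private lemma ev_natCast (A : ℝ) : ∀ᶠ n : ℕ in atTop, A ≤ (n : ℝ) :=
  tendsto_natCast_atTop_atTop.eventually_ge_atTop A

private lemma ev_two_pow (A : ℝ) : ∀ᶠ n : ℕ in atTop, A ≤ (2:ℝ)^n :=
  (tendsto_pow_atTop_atTop_of_one_lt (by norm_num : (1:ℝ) < 2)).eventually_ge_atTop A

set_option maxHeartbeats 1000000 in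
private lemma summable_b (u θ K c : ℝ) (hu0 : 0 < u) (hθ0 : 0 < θ) (hδ : 2/θ < u)
    (hK : 0 < K) (hc : 0 < c) :
    Summable (fun n : ℕ =>
      ((2*(n:ℝ)+2)⁻¹ + K * (Nat.factorial ⌈(2*(n:ℝ)+3)/θ⌉₊) * (c⁻¹) ^ ⌈(2*(n:ℝ)+3)/θ⌉₊)
        / Real.Gamma (u*(n:ℝ)+u)) := by
  have hGpos : ∀ n : ℕ, 0 < Real.Gamma (u*(n:ℝ)+u) := fun n =>
    Real.Gamma_pos_of_pos (by positivity)
  set kf : ℕ → ℕ := fun n => ⌈(2*(n:ℝ)+3)/θ⌉₊ with hkf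
  set mm : ℕ → ℕ := fun n => ⌊u*(n:ℝ)+u⌋₊ - 1 with hmm
  have hk_low : ∀ n : ℕ, (2*(n:ℝ)+3)/θ ≤ kf n := fun n => Nat.le_ceil _
  have hk_up : ∀ n : ℕ, (kf n : ℝ) ≤ (2*(n:ℝ)+3)/θ + 1 := fun n =>
    (Nat.ceil_lt_add_one (by positivity)).le
  have hfactG : ∀ n : ℕ, 2 ≤ u*(n:ℝ)+u → (Nat.factorial (mm n) : ℝ) ≤ Real.Gamma (u*(n:ℝ)+u) :=
    fun n h => fact_le_Gamma h
  have hmm_ge : ∀ n : ℕ, 2 ≤ u*(n:ℝ)+u → u*(n:ℝ)+u - 2 ≤ (mm n : ℝ) := by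
    intro n h
    have h1 : (1:ℕ) ≤ ⌊u*(n:ℝ)+u⌋₊ := Nat.le_floor (by exact_mod_cast (by linarith : (1:ℝ) ≤ u*(n:ℝ)+u))
    have h2 : u*(n:ℝ)+u - 1 < (⌊u*(n:ℝ)+u⌋₊ : ℝ) := Nat.sub_one_lt_floor _
    have h3 : (mm n : ℝ) = (⌊u*(n:ℝ)+u⌋₊ : ℝ) - 1 := by
      simp only [hmm]; push_cast [Nat.cast_sub h1]; ring
    linarith
  -- part 1
  set δ' : ℝ := u - 2/θ with hδ'
  have hδ'pos : 0 < δ' := by simp only [hδ']; linarith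
  have hb1 : Summable (fun n : ℕ => (2*(n:ℝ)+2)⁻¹ / Real.Gamma (u*(n:ℝ)+u)) := by
    set M : ℕ := ⌈(4:ℝ)^(1/u)⌉₊ with hM
    have hM4 : (4:ℝ) ≤ ((M:ℝ)+1)^u := by
      have h1 : (4:ℝ)^(1/u) ≤ (M:ℝ)+1 := le_trans (Nat.le_ceil _) (by linarith [Nat.le_ceil ((4:ℝ)^(1/u))])
      calc (4:ℝ) = ((4:ℝ)^(1/u))^u := by
            rw [← Real.rpow_mul (by norm_num), one_div, inv_mul_cancel₀ hu0.ne', Real.rpow_one]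
        _ ≤ ((M:ℝ)+1)^u := Real.rpow_le_rpow (Real.rpow_nonneg (by norm_num) _) h1 hu0.le
    set c5 : ℝ := ((M:ℝ)+1) ^ (u - 2 - (M:ℝ)) with hc5
    have hc5pos : 0 < c5 := Real.rpow_pos_of_pos (by positivity) _
    have hev : ∀ᶠ n : ℕ in atTop,
        ‖(2*(n:ℝ)+2)⁻¹ / Real.Gamma (u*(n:ℝ)+u)‖ ≤ 1 * ‖((2:ℝ)⁻¹)^n‖ := by
      filter_upwards [ev_natCast ((2-u)/u), ev_natCast (((M:ℝ)+2)/u), ev_two_pow c5⁻¹]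
        with n h1 h2 h3
      have he1 : 2 ≤ u*(n:ℝ)+u := by
        have := (div_le_iff₀ hu0).mp h1
        nlinarith
      have he2 : (M:ℕ) ≤ mm n := by
        have : (M:ℝ) ≤ (mm n : ℝ) := by
          have := (div_le_iff₀ hu0).mp h2
          have := hmm_ge n he1
          nlinarith
        exact_mod_cast this
      -- factorial lower bound for Gamma
      have hfa : ((M:ℝ)+1)^((mm n - M : ℕ)) ≤ (Nat.factorial (mm n) : ℝ) := by
        have h4 := fact_mul_pow_le_fact M (mm n - M)
        rw [Nat.add_sub_cancel' he2] at h4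
        have h5 : (M+1)^(mm n - M) ≤ Nat.factorial (mm n) :=
          le_trans (Nat.le_mul_of_pos_left _ (Nat.factorial_pos M)) h4
        exact_mod_cast h5
      have hexp : u*(n:ℝ)+u-2-(M:ℝ) ≤ ((mm n - M : ℕ) : ℝ) := by
        rw [Nat.cast_sub he2]
        have := hmm_ge n he1
        linarith
      have hfb : ((M:ℝ)+1)^(u*(n:ℝ)+u-2-(M:ℝ)) ≤ ((M:ℝ)+1)^((mm n - M : ℕ)) := by
        rw [← Real.rpow_natCast ((M:ℝ)+1) (mm n - M)]
        exact Real.rpow_le_rpow_of_exponent_le (by linarith [Nat.cast_nonneg (α := ℝ) M]) hexp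
      have hsplit : ((M:ℝ)+1)^(u*(n:ℝ)+u-2-(M:ℝ)) = (((M:ℝ)+1)^u)^n * c5 := by
        rw [show u*(n:ℝ)+u-2-(M:ℝ) = u*(n:ℝ) + (u-2-(M:ℝ)) by ring,
          Real.rpow_add (by positivity), Real.rpow_mul (by positivity), Real.rpow_natCast]
      have hG4 : (4:ℝ)^n * c5 ≤ Real.Gamma (u*(n:ℝ)+u) := by
        have h6 : (4:ℝ)^n ≤ (((M:ℝ)+1)^u)^n :=
          pow_le_pow_left₀ (by norm_num) hM4 n
        have := hfactG n he1
        nlinarith [Real.rpow_pos_of_pos (show (0:ℝ) < (M:ℝ)+1 by positivity) u,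
          pow_pos (show (0:ℝ) < ((M:ℝ)+1)^u from Real.rpow_pos_of_pos (by positivity) u) n]
      have hnum : (2*(n:ℝ)+2)⁻¹ ≤ 1 := by
        rw [inv_le_one_iff₀]; right; linarith [Nat.cast_nonneg (α := ℝ) n]
      have hGpos' := hGpos n
      have hfin : (2*(n:ℝ)+2)⁻¹ / Real.Gamma (u*(n:ℝ)+u) ≤ ((2:ℝ)⁻¹)^n := by
        have hb : (2*(n:ℝ)+2)⁻¹ / Real.Gamma (u*(n:ℝ)+u) ≤ 1 / ((4:ℝ)^n * c5) :=
          div_le_div₀ (by norm_num) hnum (by positivity) hG4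
        have hpow4 : (4:ℝ)^n = 2^n * 2^n := by rw [← mul_pow]; norm_num
        have hc' : (2:ℝ)^n ≤ (4:ℝ)^n * c5 := by
          have h1c : 1 ≤ c5 * 2^n := by
            have hp : (0:ℝ) < 2^n := by positivity
            rw [inv_le_iff_one_le_mul₀ hc5pos] at h3
            linarith [h3]
          nlinarith [pow_pos (show (0:ℝ)<2 by norm_num) n]
        have hb2 : 1 / ((4:ℝ)^n * c5) ≤ ((2:ℝ)⁻¹)^n := by
          rw [inv_pow, one_div]
          exact inv_anti₀ (by positivity) hc'
        linarith
      rw [norm_of_nonneg (by positivity), one_mul, norm_of_nonneg (by positivity)]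
      exact hfin
    exact summable_of_isBigO_nat (summable_geometric_of_lt_one (by norm_num) (by norm_num))
      (Asymptotics.isBigO_iff.mpr ⟨1, hev⟩)
  have hb2 : Summable (fun n : ℕ =>
      K * (Nat.factorial (kf n)) * (c⁻¹) ^ (kf n) / Real.Gamma (u*(n:ℝ)+u)) := by
    set d : ℝ := max c⁻¹ 1 with hd
    have hd1 : 1 ≤ d := le_max_right _ _
    have hd0 : 0 < d := lt_of_lt_of_le one_pos hd1
    set ρ : ℝ := d ^ (2/θ) with hρ
    have hρ1 : 1 ≤ ρ := by
      rw [hρ, show (1:ℝ) = d ^ (0:ℝ) by rw [Real.rpow_zero]]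
      exact Real.rpow_le_rpow_of_exponent_le hd1 (by positivity)
    have hρ0 : 0 < ρ := lt_of_lt_of_le one_pos hρ1
    set D : ℝ := d ^ (3/θ + 1) with hD
    have hD0 : 0 < D := Real.rpow_pos_of_pos hd0 _
    set B : ℕ := ⌈(4*ρ) ^ (1/δ')⌉₊ + 1 with hB
    have hB1 : (1:ℝ) ≤ (B:ℝ) := by
      have : 1 ≤ B := by omega
      exact_mod_cast this
    have hBρ : 4*ρ ≤ ((B:ℝ))^δ' := by
      have h1 : (4*ρ)^(1/δ') ≤ (B:ℝ) := by
        rw [hB]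
        push_cast
        linarith [Nat.le_ceil ((4*ρ) ^ (1/δ'))]
      calc 4*ρ = ((4*ρ)^(1/δ'))^δ' := by
            rw [← Real.rpow_mul (by positivity), one_div, inv_mul_cancel₀ hδ'pos.ne', Real.rpow_one]
        _ ≤ ((B:ℝ))^δ' := Real.rpow_le_rpow (Real.rpow_nonneg (by positivity) _) h1 hδ'pos.le
    set C2 : ℝ := 3 + 3/θ with hC2
    have hev : ∀ᶠ n : ℕ in atTop,
        ‖K * (Nat.factorial (kf n)) * (c⁻¹) ^ (kf n) / Real.Gamma (u*(n:ℝ)+u)‖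
          ≤ 1 * ‖((2:ℝ)⁻¹)^n‖ := by
      filter_upwards [ev_natCast ((2-u)/u), ev_natCast (C2/δ'),
        ev_natCast (θ*(B:ℝ)/2), ev_two_pow (K*D*((B:ℝ))^C2)] with n h1 h2 h4 h5
      have he1 : 2 ≤ u*(n:ℝ)+u := by
        have := (div_le_iff₀ hu0).mp h1; nlinarith
      have hmmn := hmm_ge n he1
      have hgapr : (kf n : ℝ) + (δ'*(n:ℝ) - C2) ≤ (mm n:ℝ) := by
        have hku := hk_up n
        have expand : δ' * (n:ℝ) = u*(n:ℝ) - (2/θ)*(n:ℝ) := by rw [hδ']; ring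
        have hdiv : (2*(n:ℝ)+3)/θ = (2/θ)*(n:ℝ) + 3/θ := by ring
        have hθinv : 0 < 3/θ := by positivity
        rw [hC2]
        nlinarith
      have hgap0 : 0 ≤ δ'*(n:ℝ) - C2 := by
        have h2' := (div_le_iff₀ hδ'pos).mp h2
        rw [mul_comm] at h2'
        linarith
      have hkm : kf n ≤ mm n := by
        have hh : (kf n : ℝ) ≤ (mm n : ℝ) := by linarith
        exact_mod_cast hh
      have hgap : δ'*(n:ℝ) - C2 ≤ ((mm n - kf n : ℕ) : ℝ) := by
        rw [Nat.cast_sub hkm]; linarith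
      have hBk : (B:ℝ) ≤ (kf n : ℝ) + 1 := by
        have hkl := hk_low n
        have h2n : θ*(B:ℝ) ≤ 2*(n:ℝ) := by
          have := (div_le_iff₀ (by norm_num : (0:ℝ) < 2)).mp h4
          nlinarith
        have hb' : (B:ℝ) ≤ (2*(n:ℝ)+3)/θ := by rw [le_div_iff₀ hθ0]; nlinarith
        linarith
      have hfa : (Nat.factorial (kf n) : ℝ) * ((kf n:ℝ)+1)^((mm n - kf n : ℕ))
          ≤ Real.Gamma (u*(n:ℝ)+u) := by
        have h6 := fact_mul_pow_le_fact (kf n) (mm n - kf n)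
        rw [Nat.add_sub_cancel' hkm] at h6
        calc (Nat.factorial (kf n) : ℝ) * ((kf n:ℝ)+1)^((mm n - kf n : ℕ))
            = ((Nat.factorial (kf n) * (kf n + 1)^(mm n - kf n) : ℕ) : ℝ) := by push_cast; ring
          _ ≤ ((Nat.factorial (mm n) : ℕ) : ℝ) := by exact_mod_cast h6
          _ ≤ Real.Gamma (u*(n:ℝ)+u) := hfactG n he1
      have hden : ((4*ρ))^n * ((B:ℝ))^(-C2) ≤ ((kf n:ℝ)+1)^((mm n - kf n : ℕ)) := by
        have s1 : ((B:ℝ))^((mm n - kf n : ℕ)) ≤ ((kf n:ℝ)+1)^((mm n - kf n : ℕ)) :=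
          pow_le_pow_left₀ (by linarith) hBk _
        have s2 : ((B:ℝ))^(δ'*(n:ℝ) - C2) ≤ ((B:ℝ))^(((mm n - kf n : ℕ) : ℝ)) :=
          Real.rpow_le_rpow_of_exponent_le hB1 hgap
        rw [Real.rpow_natCast] at s2
        have s3 : ((B:ℝ))^(δ'*(n:ℝ) - C2) = (((B:ℝ))^δ')^n * ((B:ℝ))^(-C2 : ℝ) := by
          rw [show δ'*(n:ℝ) - C2 = δ'*(n:ℝ) + (-C2) by ring,
            Real.rpow_add (by linarith), Real.rpow_mul (by linarith), Real.rpow_natCast]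
        have s4 : ((4*ρ))^n ≤ (((B:ℝ))^δ')^n := pow_le_pow_left₀ (by positivity) hBρ n
        have hBneg : (0:ℝ) < ((B:ℝ))^(-C2 : ℝ) := Real.rpow_pos_of_pos (by linarith) _
        calc ((4*ρ))^n * ((B:ℝ))^(-C2 : ℝ) ≤ (((B:ℝ))^δ')^n * ((B:ℝ))^(-C2 : ℝ) :=
              mul_le_mul_of_nonneg_right s4 hBneg.le
          _ = ((B:ℝ))^(δ'*(n:ℝ) - C2) := s3.symm
          _ ≤ ((kf n:ℝ)+1)^((mm n - kf n : ℕ)) := le_trans s2 s1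
      have hnum : (c⁻¹)^(kf n) ≤ ρ^n * D := by
        calc (c⁻¹)^(kf n) ≤ d^(kf n) := pow_le_pow_left₀ (by positivity) (le_max_left _ _) _
          _ = d^((kf n : ℕ) : ℝ) := (Real.rpow_natCast d _).symm
          _ ≤ d^((2*(n:ℝ)+3)/θ + 1) := Real.rpow_le_rpow_of_exponent_le hd1 (hk_up n)
          _ = ρ^n * D := by
              rw [show (2*(n:ℝ)+3)/θ + 1 = (2/θ)*(n:ℝ) + (3/θ + 1) by ring,
                Real.rpow_add hd0, Real.rpow_mul hd0.le, Real.rpow_natCast]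
      have hfne : (0:ℝ) < (Nat.factorial (kf n) : ℝ) := by exact_mod_cast Nat.factorial_pos _
      have hBneg : (0:ℝ) < ((B:ℝ))^(-C2 : ℝ) := Real.rpow_pos_of_pos (by linarith) _
      have w1 : K * (Nat.factorial (kf n)) * (c⁻¹)^(kf n)
          ≤ K * (Nat.factorial (kf n)) * (ρ^n * D) :=
        mul_le_mul_of_nonneg_left hnum (by positivity)
      have w2 : (Nat.factorial (kf n) : ℝ) * ((4*ρ)^n * ((B:ℝ))^(-C2 : ℝ))
          ≤ Real.Gamma (u*(n:ℝ)+u) :=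
        le_trans (mul_le_mul_of_nonneg_left hden hfne.le) hfa
      have w3 : K * (Nat.factorial (kf n)) * (c⁻¹)^(kf n) / Real.Gamma (u*(n:ℝ)+u)
          ≤ (K * (Nat.factorial (kf n)) * (ρ^n * D))
            / ((Nat.factorial (kf n) : ℝ) * ((4*ρ)^n * ((B:ℝ))^(-C2 : ℝ))) :=
        div_le_div₀ (by positivity) w1 (by positivity) w2
      have w4 : (K * (Nat.factorial (kf n)) * (ρ^n * D))
            / ((Nat.factorial (kf n) : ℝ) * ((4*ρ)^n * ((B:ℝ))^(-C2 : ℝ)))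
          = K*D*((B:ℝ))^C2 * (4:ℝ)⁻¹^n := by
        rw [mul_pow, Real.rpow_neg (by linarith)]
        have h4n : ((4:ℝ))^n ≠ 0 := by positivity
        have hρn : (ρ:ℝ)^n ≠ 0 := by positivity
        have hBC : ((B:ℝ))^(C2:ℝ) ≠ 0 := by positivity
        field_simp
        ring_nf
        rw [← mul_pow]; norm_num
      have w5 : K*D*((B:ℝ))^C2 * (4:ℝ)⁻¹^n ≤ ((2:ℝ)⁻¹)^n := by
        have e1 : ((4:ℝ))⁻¹^n = ((2:ℝ)⁻¹)^n * ((2:ℝ)⁻¹)^n := by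
          rw [← mul_pow]; norm_num
        have e2 : ((2:ℝ))^n * ((2:ℝ)⁻¹)^n = 1 := by
          rw [← mul_pow]; norm_num
        have hp : (0:ℝ) < ((2:ℝ)⁻¹)^n := by positivity
        calc K*D*((B:ℝ))^C2 * (4:ℝ)⁻¹^n
            = (K*D*((B:ℝ))^C2) * (((2:ℝ)⁻¹)^n * ((2:ℝ)⁻¹)^n) := by rw [e1]
          _ ≤ ((2:ℝ))^n * (((2:ℝ)⁻¹)^n * ((2:ℝ)⁻¹)^n) := by nlinarith
          _ = ((2:ℝ)⁻¹)^n := by rw [← mul_assoc, e2, one_mul]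
      rw [norm_of_nonneg (by positivity), one_mul, norm_of_nonneg (by positivity)]
      calc K * (Nat.factorial (kf n)) * (c⁻¹)^(kf n) / Real.Gamma (u*(n:ℝ)+u)
          ≤ _ := w3
        _ = _ := w4
        _ ≤ _ := w5
    exact summable_of_isBigO_nat (summable_geometric_of_lt_one (by norm_num) (by norm_num))
      (Asymptotics.isBigO_iff.mpr ⟨1, hev⟩)
  refine (hb1.add hb2).congr fun n => ?_
  rw [← add_div]


set_option maxHeartbeats 1000000 in
/-- Integrability of the dominating function in the small-ball expansion: if
`θ > 2/(1-β̂)` and `F : (0,∞) → [0,1]` satisfies `F y ≤ K exp(-c y^{-θ})` on `(0,1]`,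
then `y ↦ F(y) y^{-3} E_{1-β̂,1-β̂}(y^{-2})` is integrable on `(0,∞)`. -/
theorem dominating_function_integrable (βh θ K c : ℝ)
    (hβ0 : 0 < βh) (hβ1 : βh < 1) (hθ : 2 / (1 - βh) < θ) (hK : 0 < K) (hc : 0 < c)
    (F : ℝ → ℝ) (hFm : Measurable F) (hF0 : ∀ y, 0 ≤ F y) (hF1 : ∀ y, F y ≤ 1)
    (hF : ∀ y : ℝ, 0 < y → y ≤ 1 → F y ≤ K * Real.exp (-c * y ^ (-θ))) :
    IntegrableOn
      (fun y : ℝ => F y * y ^ (-3 : ℝ) *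
        ∑' n : ℕ, (y ^ (-2 : ℝ)) ^ n / Real.Gamma ((1 - βh) * n + (1 - βh)))
      (Set.Ioi 0) volume := by
  set u : ℝ := 1 - βh with hu
  have hu0 : 0 < u := by rw [hu]; linarith
  have hθ0 : 0 < θ := lt_trans (by positivity) hθ
  have hδ : 2/θ < u := by
    rw [div_lt_iff₀ hθ0]
    have h2 := (div_lt_iff₀ hu0).mp hθ
    nlinarith
  have hGpos : ∀ n : ℕ, 0 < Real.Gamma (u*(n:ℝ)+u) := fun n =>
    Real.Gamma_pos_of_pos (by positivity)
  have hterm_nonneg : ∀ (y : ℝ), 0 ≤ y → ∀ n : ℕ,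
      0 ≤ (y ^ (-2:ℝ))^n / Real.Gamma (u*(n:ℝ)+u) :=
    fun y hy n => div_nonneg (pow_nonneg (Real.rpow_nonneg hy _) n) (hGpos n).le
  have hk_ceil : ∀ n : ℕ, 2*(n:ℝ)+3 ≤ θ * (⌈(2*(n:ℝ)+3)/θ⌉₊ : ℝ) := by
    intro n
    have := Nat.le_ceil ((2*(n:ℝ)+3)/θ)
    rw [div_le_iff₀ hθ0] at this
    linarith
  -- measurability of each term (as ENNReal-valued)
  have hTermMeas : ∀ n : ℕ, Measurable (fun y : ℝ =>
      ENNReal.ofReal (F y * y ^ (-3:ℝ) * ((y ^ (-2:ℝ))^n / Real.Gamma (u*(n:ℝ)+u)))) := by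
    intro n
    apply ENNReal.measurable_ofReal.comp
    fun_prop
  constructor
  · -- a.e. strongly measurable
    have hTmeas : Measurable (fun y : ℝ =>
        (∑' n : ℕ, ENNReal.ofReal ((y ^ (-2:ℝ))^n / Real.Gamma (u*(n:ℝ)+u))).toReal) := by
      apply Measurable.ennreal_toReal
      apply Measurable.ennreal_tsum
      intro n
      apply ENNReal.measurable_ofReal.comp
      fun_prop
    have hmeas : Measurable (fun y : ℝ => F y * y ^ (-3:ℝ) *
        (∑' n : ℕ, ENNReal.ofReal ((y ^ (-2:ℝ))^n / Real.Gamma (u*(n:ℝ)+u))).toReal) :=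
      (hFm.mul (by fun_prop)).mul hTmeas
    refine hmeas.aestronglyMeasurable.congr ?_
    refine (ae_restrict_iff' measurableSet_Ioi).mpr (Filter.Eventually.of_forall fun y hy => ?_)
    have := tsum_eq_toReal_tsum_ofReal
      (fun n : ℕ => (y ^ (-2:ℝ))^n / Real.Gamma (u*(n:ℝ)+u))
      (hterm_nonneg y (le_of_lt hy))
    simp only [this]
  · -- finite integral
    rw [hasFiniteIntegral_iff_ofReal]
    swap
    · refine (ae_restrict_iff' measurableSet_Ioi).mpr (Filter.Eventually.of_forall fun y hy => ?_)
      exact mul_nonneg (mul_nonneg (hF0 y) (Real.rpow_nonneg (le_of_lt hy) _))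
        (tsum_nonneg (hterm_nonneg y (le_of_lt hy)))
    -- bound the lintegral
    have hb := summable_b u θ K c hu0 hθ0 hδ hK hc
    have hbnn : ∀ n : ℕ, 0 ≤ ((2*(n:ℝ)+2)⁻¹ + K * (Nat.factorial ⌈(2*(n:ℝ)+3)/θ⌉₊)
        * (c⁻¹) ^ ⌈(2*(n:ℝ)+3)/θ⌉₊) / Real.Gamma (u*(n:ℝ)+u) := by
      intro n
      have : (0:ℝ) ≤ (2*(n:ℝ)+2)⁻¹ := by positivity
      have : (0:ℝ) ≤ K * (Nat.factorial ⌈(2*(n:ℝ)+3)/θ⌉₊) * (c⁻¹) ^ ⌈(2*(n:ℝ)+3)/θ⌉₊ := by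
        positivity
      positivity
    calc ∫⁻ y in Set.Ioi (0:ℝ), ENNReal.ofReal (F y * y ^ (-3:ℝ) *
            ∑' n : ℕ, (y ^ (-2:ℝ))^n / Real.Gamma (u*(n:ℝ)+u))
        ≤ ∫⁻ y in Set.Ioi (0:ℝ), ∑' n : ℕ,
            ENNReal.ofReal (F y * y ^ (-3:ℝ) * ((y ^ (-2:ℝ))^n / Real.Gamma (u*(n:ℝ)+u))) := by
          refine setLIntegral_mono' measurableSet_Ioi fun y hy => ?_
          have hy0 : (0:ℝ) < y := hy
          rw [← tsum_mul_left]
          exact ofReal_tsum_le _ fun n => mul_nonneg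
            (mul_nonneg (hF0 y) (Real.rpow_nonneg hy0.le _)) (hterm_nonneg y hy0.le n)
      _ = ∑' n : ℕ, ∫⁻ y in Set.Ioi (0:ℝ),
            ENNReal.ofReal (F y * y ^ (-3:ℝ) * ((y ^ (-2:ℝ))^n / Real.Gamma (u*(n:ℝ)+u))) :=
          lintegral_tsum fun n => (hTermMeas n).aemeasurable
      _ ≤ ∑' n : ℕ, ENNReal.ofReal (((2*(n:ℝ)+2)⁻¹ + K * (Nat.factorial ⌈(2*(n:ℝ)+3)/θ⌉₊)
            * (c⁻¹) ^ ⌈(2*(n:ℝ)+3)/θ⌉₊) / Real.Gamma (u*(n:ℝ)+u)) := by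
          refine ENNReal.tsum_le_tsum fun n => ?_
          have hΓpos : 0 < Real.Gamma (u*(n:ℝ)+u) := hGpos n
          have hA_nonneg : (0:ℝ) ≤ K * (Nat.factorial ⌈(2*(n:ℝ)+3)/θ⌉₊)
              * (c⁻¹) ^ ⌈(2*(n:ℝ)+3)/θ⌉₊ := by positivity
          have hsplit : Set.Ioi (0:ℝ) = Set.Ioc 0 1 ∪ Set.Ioi 1 :=
            (Set.Ioc_union_Ioi_eq_Ioi (by norm_num : (0:ℝ) ≤ 1)).symm
          rw [hsplit]
          refine le_trans (lintegral_union_le _ _ _) ?_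
          have hpiece1 : ∫⁻ y in Set.Ioc (0:ℝ) 1,
              ENNReal.ofReal (F y * y ^ (-3:ℝ) *
                ((y ^ (-2:ℝ))^n / Real.Gamma (u*(n:ℝ)+u)))
              ≤ ENNReal.ofReal ((K * (Nat.factorial ⌈(2*(n:ℝ)+3)/θ⌉₊)
                * (c⁻¹) ^ ⌈(2*(n:ℝ)+3)/θ⌉₊) / Real.Gamma (u*(n:ℝ)+u)) := by
            have hpt : ∀ y ∈ Set.Ioc (0:ℝ) 1,
                ENNReal.ofReal (F y * y ^ (-3:ℝ) *
                  ((y ^ (-2:ℝ))^n / Real.Gamma (u*(n:ℝ)+u)))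
                ≤ ENNReal.ofReal ((K * (Nat.factorial ⌈(2*(n:ℝ)+3)/θ⌉₊)
                  * (c⁻¹) ^ ⌈(2*(n:ℝ)+3)/θ⌉₊) / Real.Gamma (u*(n:ℝ)+u)) := by
              intro y hy
              obtain ⟨hy0, hy1⟩ := hy
              set k : ℕ := ⌈(2*(n:ℝ)+3)/θ⌉₊ with hkdef
              apply ENNReal.ofReal_le_ofReal
              have hyne : (0:ℝ) ≤ y := hy0.le
              have hrw : (y ^ (-2:ℝ))^n = y ^ ((-2:ℝ)*(n:ℝ)) := by
                rw [← Real.rpow_natCast (y ^ (-2:ℝ)) n, ← Real.rpow_mul hyne]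
              have hxpos : 0 < c * y ^ (-θ) := by
                have : 0 < y ^ (-θ) := Real.rpow_pos_of_pos hy0 _
                positivity
              have hFy : F y ≤ K * Real.exp (-(c * y ^ (-θ))) := by
                have := hF y hy0 hy1
                rwa [neg_mul] at this
              have hxk : (c * y ^ (-θ))^k = c^k * (y^(θ*(k:ℝ)))⁻¹ := by
                rw [mul_pow, ← Real.rpow_natCast (y ^ (-θ)) k, ← Real.rpow_mul hyne,
                  show (-θ)*((k:ℕ):ℝ) = -(θ*((k:ℕ):ℝ)) by ring, Real.rpow_neg hyne]
              have hyT : 0 < y^(θ*(k:ℝ)) := Real.rpow_pos_of_pos hy0 _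
              have hck : (0:ℝ) < c^k := by positivity
              have heq : (Nat.factorial k : ℝ) / (c * y ^ (-θ))^k
                  = (Nat.factorial k : ℝ) * (c⁻¹)^k * y^(θ*(k:ℝ)) := by
                rw [hxk]
                field_simp
                rw [← mul_pow, mul_one_div_cancel hc.ne', one_pow]
              have hexp : Real.exp (-(c * y ^ (-θ)))
                  ≤ (Nat.factorial k : ℝ) * (c⁻¹)^k * y^(θ*(k:ℝ)) := by
                rw [← heq]
                exact exp_neg_le_fact_div k hxpos
              have h3 : (0:ℝ) ≤ y^(-3:ℝ) := Real.rpow_nonneg hyne _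
              have hP : (0:ℝ) ≤ y^((-2:ℝ)*(n:ℝ)) := Real.rpow_nonneg hyne _
              have hyprod : (0:ℝ) ≤ y^(-3:ℝ) * y^((-2:ℝ)*(n:ℝ)) := mul_nonneg h3 hP
              have c4 : y ^ (θ*(k:ℝ)) * (y ^ (-3:ℝ) * y ^ ((-2:ℝ)*(n:ℝ)))
                  = y ^ (θ*(k:ℝ) + (-3) + (-2)*(n:ℝ)) := by
                rw [← Real.rpow_add hy0, ← Real.rpow_add hy0]
                congr 1
                ring
              have hknn : 2*(n:ℝ)+3 ≤ θ * (k:ℝ) := hk_ceil n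
              have c5 : y ^ (θ*(k:ℝ) + (-3) + (-2)*(n:ℝ)) ≤ 1 :=
                Real.rpow_le_one hyne hy1 (by linarith)
              have step : F y * (y^(-3:ℝ) * y^((-2:ℝ)*(n:ℝ)))
                  ≤ K * (Nat.factorial k : ℝ) * (c⁻¹)^k := by
                calc F y * (y^(-3:ℝ) * y^((-2:ℝ)*(n:ℝ)))
                    ≤ (K * Real.exp (-(c * y ^ (-θ)))) * (y^(-3:ℝ) * y^((-2:ℝ)*(n:ℝ))) :=
                      mul_le_mul_of_nonneg_right hFy hyprod
                  _ ≤ (K * ((Nat.factorial k : ℝ) * (c⁻¹)^k * y^(θ*(k:ℝ))))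
                        * (y^(-3:ℝ) * y^((-2:ℝ)*(n:ℝ))) :=
                      mul_le_mul_of_nonneg_right
                        (mul_le_mul_of_nonneg_left hexp hK.le) hyprod
                  _ = (K * (Nat.factorial k : ℝ) * (c⁻¹)^k)
                        * (y ^ (θ*(k:ℝ)) * (y ^ (-3:ℝ) * y ^ ((-2:ℝ)*(n:ℝ)))) := by ring
                  _ = (K * (Nat.factorial k : ℝ) * (c⁻¹)^k)
                        * y ^ (θ*(k:ℝ) + (-3) + (-2)*(n:ℝ)) := by rw [c4]
                  _ ≤ (K * (Nat.factorial k : ℝ) * (c⁻¹)^k) * 1 :=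
                      mul_le_mul_of_nonneg_left c5 hA_nonneg
                  _ = K * (Nat.factorial k : ℝ) * (c⁻¹)^k := mul_one _
              have harr : F y * y ^ (-3:ℝ) * ((y ^ (-2:ℝ))^n / Real.Gamma (u*(n:ℝ)+u))
                  = (F y * (y^(-3:ℝ) * y^((-2:ℝ)*(n:ℝ)))) * (Real.Gamma (u*(n:ℝ)+u))⁻¹ := by
                rw [hrw]; ring
              rw [harr, div_eq_mul_inv]
              exact mul_le_mul_of_nonneg_right step (inv_nonneg.mpr hΓpos.le)
            refine le_trans (setLIntegral_mono' measurableSet_Ioc hpt) (le_of_eq ?_)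
            rw [setLIntegral_const, Real.volume_Ioc]
            norm_num
          have hpiece2 : ∫⁻ y in Set.Ioi (1:ℝ),
              ENNReal.ofReal (F y * y ^ (-3:ℝ) *
                ((y ^ (-2:ℝ))^n / Real.Gamma (u*(n:ℝ)+u)))
              ≤ ENNReal.ofReal ((2*(n:ℝ)+2)⁻¹ / Real.Gamma (u*(n:ℝ)+u)) := by
            have ha : (-(2*(n:ℝ)+3)) < -1 := by
              have : (0:ℝ) ≤ (n:ℝ) := Nat.cast_nonneg n
              linarith
            have hpt2 : ∀ y ∈ Set.Ioi (1:ℝ),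
                ENNReal.ofReal (F y * y ^ (-3:ℝ) *
                  ((y ^ (-2:ℝ))^n / Real.Gamma (u*(n:ℝ)+u)))
                ≤ ENNReal.ofReal (y ^ (-(2*(n:ℝ)+3)) / Real.Gamma (u*(n:ℝ)+u)) := by
              intro y hy
              have hy0 : (0:ℝ) < y := lt_trans one_pos hy
              have hyne : (0:ℝ) ≤ y := hy0.le
              apply ENNReal.ofReal_le_ofReal
              have hrw : (y ^ (-2:ℝ))^n = y ^ ((-2:ℝ)*(n:ℝ)) := by
                rw [← Real.rpow_natCast (y ^ (-2:ℝ)) n, ← Real.rpow_mul hyne]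
              have hcomb : y^(-3:ℝ) * y^((-2:ℝ)*(n:ℝ)) = y ^ (-(2*(n:ℝ)+3)) := by
                rw [← Real.rpow_add hy0]
                norm_num
              have harr : F y * y ^ (-3:ℝ) * ((y ^ (-2:ℝ))^n / Real.Gamma (u*(n:ℝ)+u))
                  = (F y * (y^(-3:ℝ) * y^((-2:ℝ)*(n:ℝ)))) * (Real.Gamma (u*(n:ℝ)+u))⁻¹ := by
                rw [hrw]; ring
              rw [harr, div_eq_mul_inv]
              have hstep : F y * (y^(-3:ℝ) * y^((-2:ℝ)*(n:ℝ))) ≤ y ^ (-(2*(n:ℝ)+3)) := by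
                rw [hcomb]
                have := Real.rpow_nonneg hyne (-(2*(n:ℝ)+3))
                nlinarith [hF1 y, hF0 y]
              exact mul_le_mul_of_nonneg_right hstep (inv_nonneg.mpr hΓpos.le)
            have hint : IntegrableOn (fun y : ℝ => y ^ (-(2*(n:ℝ)+3)) / Real.Gamma (u*(n:ℝ)+u))
                (Set.Ioi (1:ℝ)) volume :=
              (integrableOn_Ioi_rpow_of_lt ha one_pos).div_const _
            have hnn : (0:ℝ→ℝ) ≤ᵐ[volume.restrict (Set.Ioi (1:ℝ))]
                (fun y : ℝ => y ^ (-(2*(n:ℝ)+3)) / Real.Gamma (u*(n:ℝ)+u)) := by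
              filter_upwards [ae_restrict_mem measurableSet_Ioi] with y hy
              have hy0 : (0:ℝ) < y := lt_trans one_pos hy
              exact div_nonneg (Real.rpow_nonneg hy0.le _) hΓpos.le
            have hval : ∫ y in Set.Ioi (1:ℝ), y ^ (-(2*(n:ℝ)+3)) / Real.Gamma (u*(n:ℝ)+u)
                = (2*(n:ℝ)+2)⁻¹ / Real.Gamma (u*(n:ℝ)+u) := by
              rw [integral_div, integral_Ioi_rpow_of_lt ha one_pos, Real.one_rpow]
              have hne : (2*(n:ℝ)+2) ≠ 0 := by positivity
              rw [show (-(2*(n:ℝ)+3)) + 1 = -(2*(n:ℝ)+2) by ring]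
              rw [neg_div_neg_eq, one_div]
            calc ∫⁻ y in Set.Ioi (1:ℝ), ENNReal.ofReal (F y * y ^ (-3:ℝ) *
                  ((y ^ (-2:ℝ))^n / Real.Gamma (u*(n:ℝ)+u)))
                ≤ ∫⁻ y in Set.Ioi (1:ℝ),
                    ENNReal.ofReal (y ^ (-(2*(n:ℝ)+3)) / Real.Gamma (u*(n:ℝ)+u)) :=
                  setLIntegral_mono' measurableSet_Ioi hpt2
              _ = ENNReal.ofReal (∫ y in Set.Ioi (1:ℝ),
                    y ^ (-(2*(n:ℝ)+3)) / Real.Gamma (u*(n:ℝ)+u)) :=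
                  (MeasureTheory.ofReal_integral_eq_lintegral_ofReal hint hnn).symm
              _ = ENNReal.ofReal ((2*(n:ℝ)+2)⁻¹ / Real.Gamma (u*(n:ℝ)+u)) := by rw [hval]
          calc _ ≤ ENNReal.ofReal ((K * (Nat.factorial ⌈(2*(n:ℝ)+3)/θ⌉₊)
                * (c⁻¹) ^ ⌈(2*(n:ℝ)+3)/θ⌉₊) / Real.Gamma (u*(n:ℝ)+u))
                + ENNReal.ofReal ((2*(n:ℝ)+2)⁻¹ / Real.Gamma (u*(n:ℝ)+u)) :=
              add_le_add hpiece1 hpiece2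
            _ = ENNReal.ofReal (((2*(n:ℝ)+2)⁻¹ + K * (Nat.factorial ⌈(2*(n:ℝ)+3)/θ⌉₊)
                * (c⁻¹) ^ ⌈(2*(n:ℝ)+3)/θ⌉₊) / Real.Gamma (u*(n:ℝ)+u)) := by
              rw [← ENNReal.ofReal_add (div_nonneg hA_nonneg hΓpos.le)
                (div_nonneg (by positivity) hΓpos.le), ← add_div, add_comm]
      _ = ENNReal.ofReal (∑' n : ℕ, ((2*(n:ℝ)+2)⁻¹ + K * (Nat.factorial ⌈(2*(n:ℝ)+3)/θ⌉₊)
            * (c⁻¹) ^ ⌈(2*(n:ℝ)+3)/θ⌉₊) / Real.Gamma (u*(n:ℝ)+u)) :=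
          (ENNReal.ofReal_tsum_of_nonneg hbnn hb).symm
      _ < ⊤ := ENNReal.ofReal_lt_top
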